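/- Let U be a bounded domain in R^n with finite positive measure, 1 < p < ∞, and let ρ : (0,∞) → (0,∞) be a nondecreasing function. Then for every integrable function u on U with mean value u_U = (1/|U|)∫_U u, one has ∫_U |u(x)-u_U|^p dx ≤ (diam(U)^n · ρ(diam(U))^p / |U|) · ∫_U∫_U |u(x)-u(y)|^p / (|x-y|^n · ρ(|x-y|)^p) dy dx. -/

import Mathlib

open MeasureTheory Metric Set ENNReal

/-- Proposition 5.5 of the paper: a fractional Poincaré-type inequality with a
general nondecreasing radial kernel, on an arbitrary bounded domain. -/
theorem fractional_poincare_radial_kernel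
    (n : ℕ) (hn : 1 ≤ n) (U : Set (EuclideanSpace ℝ (Fin n)))
    (hUopen : IsOpen U) (hUconn : IsConnected U) (hUbdd : Bornology.IsBounded U)
    (hUpos : 0 < volume U) (p : ℝ) (hp : 1 < p)
    (ρ : ℝ → ℝ) (hρpos : ∀ r > (0 : ℝ), 0 < ρ r) (hρmono : MonotoneOn ρ (Set.Ioi 0))
    (u : EuclideanSpace ℝ (Fin n) → ℝ) (hu : Measurable u)
    (huint : IntegrableOn u U volume) :
    ∫⁻ x in U, ENNReal.ofReal
        (|u x - (∫ y in U, u y) / (volume U).toReal| ^ p) ≤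
      (ENNReal.ofReal (Metric.diam U ^ (n : ℝ) * ρ (Metric.diam U) ^ p) / volume U) *
        ∫⁻ x in U, ∫⁻ y in U,
          ENNReal.ofReal (|u x - u y| ^ p / (‖x - y‖ ^ (n : ℝ) * ρ ‖x - y‖ ^ p)) := by
  have hMfin : volume U < ∞ := hUbdd.measure_lt_top
  set M := volume U with hM
  have hM0 : M ≠ 0 := hUpos.ne'
  have hMt : M ≠ ∞ := hMfin.ne
  have hp0 : (0:ℝ) < p := lt_trans one_pos hp
  have hc : (0:ℝ) < M.toReal := ENNReal.toReal_pos hM0 hMt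
  set C : ℝ := Metric.diam U ^ (n:ℝ) * ρ (Metric.diam U) ^ p with hC
  set q := Real.conjExponent p with hqdef
  have hq : p.HolderConjugate q := Real.HolderConjugate.conjExponent hp
  -- Jensen/Hölder step
  have keyA : ∀ x, ENNReal.ofReal (|u x - (∫ y in U, u y) / M.toReal| ^ p)
      ≤ M⁻¹ * ∫⁻ y in U, ENNReal.ofReal (|u x - u y| ^ p) := by
    intro x
    set L := ∫⁻ y in U, ENNReal.ofReal (|u x - u y| ^ p) with hL
    have hconst : IntegrableOn (fun _ => u x) U volume :=
      integrableOn_const hMfin.ne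
    have hint : IntegrableOn (fun y => u x - u y) U volume := hconst.sub huint
    have hmean : u x - (∫ y in U, u y) / M.toReal
        = (∫ y in U, (u x - u y)) / M.toReal := by
      rw [integral_sub hconst huint, setIntegral_const, smul_eq_mul, measureReal_def, ← hM, sub_div,
        mul_div_cancel_left₀ _ hc.ne']
    have habs : |u x - (∫ y in U, u y) / M.toReal|
        ≤ (∫ y in U, |u x - u y|) / M.toReal := by
      rw [hmean, abs_div, abs_of_pos hc]
      gcongr
      calc |∫ y in U, (u x - u y)| = ‖∫ y in U, (u x - u y)‖ := (Real.norm_eq_abs _).symm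
        _ ≤ ∫ y in U, ‖u x - u y‖ := norm_integral_le_integral_norm _
        _ = ∫ y in U, |u x - u y| := by simp [Real.norm_eq_abs]
    have h1 : ENNReal.ofReal |u x - (∫ y in U, u y) / M.toReal|
        ≤ (∫⁻ y in U, ENNReal.ofReal |u x - u y|) / M := by
      calc ENNReal.ofReal |u x - (∫ y in U, u y) / M.toReal|
          ≤ ENNReal.ofReal ((∫ y in U, |u x - u y|) / M.toReal) :=
            ENNReal.ofReal_le_ofReal habs
        _ = ENNReal.ofReal (∫ y in U, |u x - u y|) / ENNReal.ofReal M.toReal := by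
            rw [ENNReal.ofReal_div_of_pos hc]
        _ = (∫⁻ y in U, ENNReal.ofReal |u x - u y|) / M := by
            rw [ofReal_integral_eq_lintegral_ofReal hint.abs
              (ae_of_all _ fun y => abs_nonneg _), ENNReal.ofReal_toReal hMt]
    -- Hölder with the constant function 1
    have hmeas : AEMeasurable (fun y => ENNReal.ofReal |u x - u y|) (volume.restrict U) :=
      (measurable_const.sub hu).abs.ennreal_ofReal.aemeasurable
    have hold : (∫⁻ y in U, ENNReal.ofReal |u x - u y|) ≤ L ^ (1/p) * M ^ (1/q) := by
      have h := ENNReal.lintegral_mul_le_Lp_mul_Lq (volume.restrict U) hq hmeas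
        (aemeasurable_const : AEMeasurable (fun _ => (1:ℝ≥0∞)) _)
      simp only [Pi.mul_apply, mul_one, ENNReal.one_rpow, lintegral_one,
        Measure.restrict_apply_univ] at h
      have hLrw : (∫⁻ y in U, ENNReal.ofReal |u x - u y| ^ p) = L := by
        refine lintegral_congr fun y => ?_
        rw [ENNReal.ofReal_rpow_of_nonneg (abs_nonneg _) hp0.le]
      rw [hLrw] at h
      exact h
    have hpq1 : (1/q) * p = p - 1 := by
      have h2 : 1/q = 1 - 1/p := by
        have := hq.inv_add_inv_eq_one
        rw [inv_eq_one_div, inv_eq_one_div] at this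
        linarith
      rw [h2]
      field_simp
    calc ENNReal.ofReal (|u x - (∫ y in U, u y) / M.toReal| ^ p)
        = (ENNReal.ofReal |u x - (∫ y in U, u y) / M.toReal|) ^ p :=
          (ENNReal.ofReal_rpow_of_nonneg (abs_nonneg _) hp0.le).symm
      _ ≤ ((∫⁻ y in U, ENNReal.ofReal |u x - u y|) / M) ^ p :=
          ENNReal.rpow_le_rpow h1 hp0.le
      _ ≤ ((L ^ (1/p) * M ^ (1/q)) / M) ^ p := by gcongr
      _ = L * M ^ (p - 1) / M ^ p := by
          rw [ENNReal.div_rpow_of_nonneg _ _ hp0.le,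
            ENNReal.mul_rpow_of_nonneg _ _ hp0.le,
            ← ENNReal.rpow_mul L, ← ENNReal.rpow_mul M,
            one_div_mul_cancel hp0.ne', ENNReal.rpow_one, hpq1]
      _ = M⁻¹ * L := by
          rw [mul_div_assoc, ← ENNReal.rpow_sub _ _ hM0 hMt]
          have h3 : p - 1 - p = -1 := by ring
          rw [h3, ENNReal.rpow_neg_one, mul_comm]
  -- kernel comparison step
  have keyB : ∀ x ∈ U, (∫⁻ y in U, ENNReal.ofReal (|u x - u y| ^ p))
      ≤ ENNReal.ofReal C *
        ∫⁻ y in U, ENNReal.ofReal (|u x - u y| ^ p / (‖x - y‖ ^ (n:ℝ) * ρ ‖x - y‖ ^ p)) := by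
    intro x hx
    rw [← lintegral_const_mul' _ _ ENNReal.ofReal_ne_top]
    refine lintegral_mono_ae ?_
    filter_upwards [ae_restrict_mem hUopen.measurableSet] with y hy
    by_cases hxy : x = y
    · simp [hxy, Real.zero_rpow hp0.ne']
    · have ht : 0 < ‖x - y‖ := by rwa [norm_pos_iff, sub_ne_zero]
      have htd : ‖x - y‖ ≤ Metric.diam U := by
        have := Metric.dist_le_diam_of_mem hUbdd hx hy
        rwa [dist_eq_norm] at this
      have hd0 : (0:ℝ) < Metric.diam U := lt_of_lt_of_le ht htd
      set D : ℝ := ‖x - y‖ ^ (n:ℝ) * ρ ‖x - y‖ ^ p with hD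
      have hDpos : 0 < D :=
        mul_pos (Real.rpow_pos_of_pos ht _) (Real.rpow_pos_of_pos (hρpos _ ht) _)
      have hDC : D ≤ C := by
        refine mul_le_mul (Real.rpow_le_rpow ht.le htd (by positivity))
          (Real.rpow_le_rpow (hρpos _ ht).le (hρmono ht hd0 htd) hp0.le)
          (Real.rpow_nonneg (hρpos _ ht).le _) (by positivity)
      have hCpos : 0 < C := lt_of_lt_of_le hDpos hDC
      have hkey : |u x - u y| ^ p ≤ C * (|u x - u y| ^ p / D) := by
        have hap : 0 ≤ |u x - u y| ^ p := Real.rpow_nonneg (abs_nonneg _) _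
        calc |u x - u y| ^ p = D * (|u x - u y| ^ p / D) := by
              rw [mul_div_cancel₀]; exact hDpos.ne'
          _ ≤ C * (|u x - u y| ^ p / D) :=
              mul_le_mul_of_nonneg_right hDC (div_nonneg hap hDpos.le)
      calc ENNReal.ofReal (|u x - u y| ^ p)
          ≤ ENNReal.ofReal (C * (|u x - u y| ^ p / D)) := ENNReal.ofReal_le_ofReal hkey
        _ = ENNReal.ofReal C * ENNReal.ofReal (|u x - u y| ^ p / D) :=
            ENNReal.ofReal_mul hCpos.le
  -- assemble
  calc ∫⁻ x in U, ENNReal.ofReal (|u x - (∫ y in U, u y) / M.toReal| ^ p)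
      ≤ ∫⁻ x in U, M⁻¹ * ∫⁻ y in U, ENNReal.ofReal (|u x - u y| ^ p) :=
        lintegral_mono fun x => keyA x
    _ ≤ ∫⁻ x in U, M⁻¹ * (ENNReal.ofReal C *
          ∫⁻ y in U, ENNReal.ofReal (|u x - u y| ^ p / (‖x - y‖ ^ (n:ℝ) * ρ ‖x - y‖ ^ p))) := by
        refine lintegral_mono_ae ?_
        filter_upwards [ae_restrict_mem hUopen.measurableSet] with x hx
        exact mul_le_mul_right (keyB x hx) _
    _ = (ENNReal.ofReal C / M) *
          ∫⁻ x in U, ∫⁻ y in U,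
            ENNReal.ofReal (|u x - u y| ^ p / (‖x - y‖ ^ (n:ℝ) * ρ ‖x - y‖ ^ p)) := by
        simp_rw [← mul_assoc]
        rw [lintegral_const_mul' _ _ (by
          exact ENNReal.mul_ne_top (ENNReal.inv_ne_top.2 hM0) ENNReal.ofReal_ne_top),
          ENNReal.div_eq_inv_mul, mul_comm M⁻¹ (ENNReal.ofReal C)]
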